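/- For any threshold θ'' < θ, the outer-join preference score satisfies h_o(θ'') ≤ h_o(θ) + min{|R \ cover^R(θ)|, |S \ cover^S(θ)|}, where h_o(θ) = |cover^R(θ)| + |cover^S(θ)| − |join(θ)|. -/

import Mathlib

open scoped Classical

noncomputable def simJoin {α β : Type*} (R : Finset α) (S : Finset β)
    (sim : α → β → ℝ) (θ : ℝ) : Finset (α × β) :=
  (R ×ˢ S).filter fun p => θ ≤ sim p.1 p.2

noncomputable def coverR {α β : Type*} (R : Finset α) (S : Finset β)
    (sim : α → β → ℝ) (θ : ℝ) : Finset α :=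
  R.filter fun r => ∃ s ∈ S, θ ≤ sim r s

noncomputable def coverS {α β : Type*} (R : Finset α) (S : Finset β)
    (sim : α → β → ℝ) (θ : ℝ) : Finset β :=
  S.filter fun s => ∃ r ∈ R, θ ≤ sim r s

/-- `h_o(θ) = |cover^R(θ)| + |cover^S(θ)| − |join(θ)|`. -/
noncomputable def ho {α β : Type*} (R : Finset α) (S : Finset β)
    (sim : α → β → ℝ) (θ : ℝ) : ℤ :=
  (coverR R S sim θ).card + (coverS R S sim θ).card - (simJoin R S sim θ).card

lemma join_mono {α β : Type*} (R : Finset α) (S : Finset β)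
    (sim : α → β → ℝ) {θ θ'' : ℝ} (hle : θ'' ≤ θ) :
    simJoin R S sim θ ⊆ simJoin R S sim θ'' := by
  intro p hp
  rcases Finset.mem_filter.mp hp with ⟨h1, h2⟩
  exact Finset.mem_filter.mpr ⟨h1, le_trans hle h2⟩

lemma auxR {α β : Type*} (R : Finset α) (S : Finset β)
    (sim : α → β → ℝ) {θ θ'' : ℝ} (hle : θ'' ≤ θ) :
    (simJoin R S sim θ).card + (coverR R S sim θ'' \ coverR R S sim θ).card
      ≤ (simJoin R S sim θ'').card := by
  classical
  have hJsub := join_mono R S sim hle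
  by_cases hS : S.Nonempty
  · have : Nonempty β := ⟨hS.choose⟩
    set A := coverR R S sim θ'' \ coverR R S sim θ with hA
    have key : A.card ≤ (simJoin R S sim θ'' \ simJoin R S sim θ).card := by
      apply Finset.card_le_card_of_injOn
        (fun r => (r, if hr : ∃ s ∈ S, θ'' ≤ sim r s then hr.choose else Classical.arbitrary β))
      · intro r hr
        rcases Finset.mem_sdiff.mp hr with ⟨hr1, hr2⟩
        rcases Finset.mem_filter.mp hr1 with ⟨hrR, hex⟩
        simp only [dif_pos hex]
        obtain ⟨hsS, hsim⟩ := hex.choose_spec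
        rw [Finset.mem_coe, Finset.mem_sdiff]
        constructor
        · exact Finset.mem_filter.mpr ⟨Finset.mem_product.mpr ⟨hrR, hsS⟩, hsim⟩
        · intro hmem
          rcases Finset.mem_filter.mp hmem with ⟨_, hθ⟩
          exact hr2 (Finset.mem_filter.mpr ⟨hrR, ⟨_, hsS, hθ⟩⟩)
      · intro r _ r' _ heq
        exact (Prod.mk.injEq _ _ _ _ ▸ heq).1
    rw [show (simJoin R S sim θ'' \ simJoin R S sim θ).card = _ from Finset.card_sdiff,
      Finset.inter_eq_left.mpr hJsub] at key
    have := Finset.card_le_card hJsub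
    omega
  · have : coverR R S sim θ'' = ∅ := by
      apply Finset.filter_false_of_mem
      intro r _ ⟨s, hs, _⟩
      exact hS ⟨s, hs⟩
    rw [this]
    simp [Finset.card_le_card hJsub]

lemma auxS {α β : Type*} (R : Finset α) (S : Finset β)
    (sim : α → β → ℝ) {θ θ'' : ℝ} (hle : θ'' ≤ θ) :
    (simJoin R S sim θ).card + (coverS R S sim θ'' \ coverS R S sim θ).card
      ≤ (simJoin R S sim θ'').card := by
  classical
  have hJsub := join_mono R S sim hle
  by_cases hR : R.Nonempty
  · have : Nonempty α := ⟨hR.choose⟩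
    set B := coverS R S sim θ'' \ coverS R S sim θ with hB
    have key : B.card ≤ (simJoin R S sim θ'' \ simJoin R S sim θ).card := by
      apply Finset.card_le_card_of_injOn
        (fun s => ((if hs : ∃ r ∈ R, θ'' ≤ sim r s then hs.choose else Classical.arbitrary α), s))
      · intro s hs
        rcases Finset.mem_sdiff.mp hs with ⟨hs1, hs2⟩
        rcases Finset.mem_filter.mp hs1 with ⟨hsS, hex⟩
        simp only [dif_pos hex]
        obtain ⟨hrR, hsim⟩ := hex.choose_spec
        rw [Finset.mem_coe, Finset.mem_sdiff]
        constructor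
        · exact Finset.mem_filter.mpr ⟨Finset.mem_product.mpr ⟨hrR, hsS⟩, hsim⟩
        · intro hmem
          rcases Finset.mem_filter.mp hmem with ⟨_, hθ⟩
          exact hs2 (Finset.mem_filter.mpr ⟨hsS, ⟨_, hrR, hθ⟩⟩)
      · intro s _ s' _ heq
        exact (Prod.mk.injEq _ _ _ _ ▸ heq).2
    rw [show (simJoin R S sim θ'' \ simJoin R S sim θ).card = _ from Finset.card_sdiff,
      Finset.inter_eq_left.mpr hJsub] at key
    have := Finset.card_le_card hJsub
    omega
  · have : coverS R S sim θ'' = ∅ := by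
      apply Finset.filter_false_of_mem
      intro s _ ⟨r, hr, _⟩
      exact hR ⟨r, hr⟩
    rw [this]
    simp [Finset.card_le_card hJsub]

theorem minoutjoin_upper_bound {α β : Type*} (R : Finset α) (S : Finset β)
    (sim : α → β → ℝ) (θ θ'' : ℝ) (h : θ'' < θ) :
    ho R S sim θ'' ≤ ho R S sim θ +
      min ((R \ coverR R S sim θ).card : ℤ) ((S \ coverS R S sim θ).card : ℤ) := by
  classical
  have hle : θ'' ≤ θ := le_of_lt h
  have hCRsub : coverR R S sim θ ⊆ coverR R S sim θ'' := by
    intro r hr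
    rcases Finset.mem_filter.mp hr with ⟨h1, s, hs, hθ⟩
    exact Finset.mem_filter.mpr ⟨h1, s, hs, le_trans hle hθ⟩
  have hCSsub : coverS R S sim θ ⊆ coverS R S sim θ'' := by
    intro s hs
    rcases Finset.mem_filter.mp hs with ⟨h1, r, hr, hθ⟩
    exact Finset.mem_filter.mpr ⟨h1, r, hr, le_trans hle hθ⟩
  have h1 := auxR R S sim hle
  have h2 := auxS R S sim hle
  have hCR : (coverR R S sim θ'' \ coverR R S sim θ).card + (coverR R S sim θ).card
      = (coverR R S sim θ'').card := Finset.card_sdiff_add_card_eq_card hCRsub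
  have hCS : (coverS R S sim θ'' \ coverS R S sim θ).card + (coverS R S sim θ).card
      = (coverS R S sim θ'').card := Finset.card_sdiff_add_card_eq_card hCSsub
  have hA : (coverR R S sim θ'' \ coverR R S sim θ).card ≤ (R \ coverR R S sim θ).card :=
    Finset.card_le_card (Finset.sdiff_subset_sdiff (Finset.filter_subset _ _) le_rfl)
  have hB : (coverS R S sim θ'' \ coverS R S sim θ).card ≤ (S \ coverS R S sim θ).card :=
    Finset.card_le_card (Finset.sdiff_subset_sdiff (Finset.filter_subset _ _) le_rfl)
  unfold ho
  rcases min_choice ((R \ coverR R S sim θ).card : ℤ) ((S \ coverS R S sim θ).card : ℤ) with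
    hm | hm <;> rw [hm] <;>
  · have hmin := min_le_left ((R \ coverR R S sim θ).card : ℤ) ((S \ coverS R S sim θ).card : ℤ)
    have hmin' := min_le_right ((R \ coverR R S sim θ).card : ℤ) ((S \ coverS R S sim θ).card : ℤ)
    rw [hm] at hmin hmin'
    omega
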